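/- (q-addition formula for cosine) Let q be a real number with 0 < q < 1 and let x, y be complex numbers with |x| < 1/(1−q) and |y| < 1/(1−q). Then the series cos_q(x ⊕_q y) := ∑_{n=0}^{∞} (−1)^n (x ⊕_q y)^{2n}/[2n]_q! converges and cos_q(x ⊕_q y) = cos_q(x)·cos_q(y) − sin_q(x)·sin_q(y). -/

import Mathlib

open Filter Topology

/-- The `q`-basic number `[n]_q = (1 - q^n)/(1 - q)`. -/
noncomputable def qNum (q : ℝ) (n : ℕ) : ℝ := (1 - q ^ n) / (1 - q)

/-- The `q`-factorial `[n]_q! = [1]_q [2]_q ⋯ [n]_q`, with `[0]_q! = 1`. -/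
noncomputable def qFact (q : ℝ) (n : ℕ) : ℝ := ∏ j ∈ Finset.range n, qNum q (j + 1)

/-- The Gaussian binomial coefficient `[n]_q! / ([k]_q! [n-k]_q!)`. -/
noncomputable def qBinom (q : ℝ) (n k : ℕ) : ℝ := qFact q n / (qFact q k * qFact q (n - k))

/-- The `q`-exponential `e_q(z) = ∑ z^n / [n]_q!`. -/
noncomputable def qExp (q : ℝ) (z : ℂ) : ℂ := ∑' n : ℕ, z ^ n / (qFact q n : ℂ)

/-- The `q`-sine `sin_q(z) = ∑ (-1)^n z^(2n+1) / [2n+1]_q!`. -/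
noncomputable def qSin (q : ℝ) (z : ℂ) : ℂ :=
  ∑' n : ℕ, (-1 : ℂ) ^ n * z ^ (2 * n + 1) / (qFact q (2 * n + 1) : ℂ)

/-- The `q`-cosine `cos_q(z) = ∑ (-1)^n z^(2n) / [2n]_q!`. -/
noncomputable def qCos (q : ℝ) (z : ℂ) : ℂ :=
  ∑' n : ℕ, (-1 : ℂ) ^ n * z ^ (2 * n) / (qFact q (2 * n) : ℂ)

/-- The `q`-addition power `(x ⊕_q y)^n = ∑_{k=0}^n binom_q(n,k) x^k y^(n-k)`. -/
noncomputable def qAddPow (q : ℝ) (x y : ℂ) (n : ℕ) : ℂ :=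
  ∑ k ∈ Finset.range (n + 1), (qBinom q n k : ℂ) * x ^ k * y ^ (n - k)

/-- The `q`-subtraction power `(x ⊖_q y)^n = ∑_{k=0}^n binom_q(n,k) (-1)^(n-k) x^k y^(n-k)`. -/
noncomputable def qSubPow (q : ℝ) (x y : ℂ) (n : ℕ) : ℂ :=
  ∑ k ∈ Finset.range (n + 1), (qBinom q n k : ℂ) * (-1 : ℂ) ^ (n - k) * x ^ k * y ^ (n - k)

/-- The `q`-tangent `tan_q(z) = sin_q(z)/cos_q(z)`. -/
noncomputable def qTan (q : ℝ) (z : ℂ) : ℂ := qSin q z / qCos q z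

/-- The second `q`-exponential `E_q(z) = ∑ q^(n(n-1)/2) z^n / [n]_q!`. -/
noncomputable def qExpE (q : ℝ) (z : ℂ) : ℂ :=
  ∑' n : ℕ, (q : ℂ) ^ (n * (n - 1) / 2) * z ^ n / (qFact q n : ℂ)
lemma qFact_pos {q : ℝ} (hq0 : 0 < q) (hq1 : q < 1) (n : ℕ) : 0 < qFact q n := by
  apply Finset.prod_pos
  intro j _
  have h1 : q ^ (j + 1) < 1 := pow_lt_one₀ hq0.le hq1 (Nat.succ_ne_zero j)
  exact div_pos (by linarith) (by linarith)

lemma qFact_succ (q : ℝ) (n : ℕ) : qFact q (n + 1) = qFact q n * ((1 - q ^ (n+1)) / (1 - q)) := by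
  rw [qFact, Finset.prod_range_succ]; rfl

lemma aux_summable {q : ℝ} (hq0 : 0 < q) (hq1 : q < 1) (z : ℂ)
    (hz : ‖z‖ < 1 / (1 - q)) :
    Summable (fun n : ℕ => z ^ n / (qFact q n : ℂ)) := by
  have hq' : (0:ℝ) < 1 - q := by linarith
  by_cases hz0 : z = 0
  · apply summable_of_ne_finset_zero (s := {0})
    intro n hn
    simp only [Finset.mem_singleton] at hn
    simp [hz0, zero_pow hn]
  · have hFne : ∀ n, ((qFact q n : ℂ)) ≠ 0 := by
      intro n
      exact_mod_cast (qFact_pos hq0 hq1 n).ne'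
    apply summable_of_ratio_test_tendsto_lt_one (l := ‖z‖ * (1 - q))
    · exact (lt_div_iff₀ hq').mp hz
    · filter_upwards with n
      exact div_ne_zero (pow_ne_zero _ hz0) (hFne n)
    · have h0 : Tendsto (fun n : ℕ => (1 - q ^ (n+1))) atTop (𝓝 1) := by
        have := (tendsto_pow_atTop_nhds_zero_of_lt_one hq0.le hq1).comp
          (tendsto_add_atTop_nat 1)
        simpa using (tendsto_const_nhds (x := (1:ℝ))).sub this
      have h1 : Tendsto (fun n : ℕ => ‖z‖ * (1 - q) / (1 - q ^ (n+1)))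
          atTop (𝓝 (‖z‖ * (1 - q))) := by
        have h := (tendsto_const_nhds (x := ‖z‖ * (1 - q))).div h0 one_ne_zero
        rw [div_one] at h
        exact h
      refine h1.congr fun n => ?_
      have hFpos := qFact_pos hq0 hq1 n
      have hFpos' := qFact_pos hq0 hq1 (n+1)
      have hqn : (0:ℝ) < 1 - q ^ (n+1) := by
        have h := pow_lt_one₀ hq0.le hq1 (n := n+1) (by omega); linarith
      rw [norm_div, norm_div, norm_pow, norm_pow, Complex.norm_real, Complex.norm_real,
        Real.norm_eq_abs, Real.norm_eq_abs, abs_of_pos hFpos, abs_of_pos hFpos',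
        qFact_succ]
      have hza : ‖z‖ ≠ 0 := norm_ne_zero_iff.mpr hz0
      have h1 : (1:ℝ) - q ≠ 0 := hq'.ne'
      have h2 : (1:ℝ) - q ^ (n+1) ≠ 0 := hqn.ne'
      field_simp
      ring

lemma qExpI_hasSum {q : ℝ} (hq0 : 0 < q) (hq1 : q < 1) (z : ℂ)
    (hz : ‖z‖ < 1 / (1 - q)) :
    HasSum (fun n : ℕ => (Complex.I * z) ^ n / (qFact q n : ℂ))
      (qCos q z + Complex.I * qSin q z) := by
  have hf := aux_summable hq0 hq1 (Complex.I * z)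
    (by rwa [norm_mul, Complex.norm_I, one_mul])
  have hinj : Function.Injective (fun k : ℕ => 2 * k) := by
    intro a b h; simp only at h; omega
  have hinj' : Function.Injective (fun k : ℕ => 2 * k + 1) := by
    intro a b h; simp only at h; omega
  have heterm : ∀ k : ℕ, (Complex.I * z) ^ (2 * k) / (qFact q (2 * k) : ℂ)
      = (-1 : ℂ) ^ k * z ^ (2 * k) / (qFact q (2 * k) : ℂ) := by
    intro k
    rw [mul_pow, pow_mul Complex.I, Complex.I_sq]
  have hoterm : ∀ k : ℕ, (Complex.I * z) ^ (2 * k + 1) / (qFact q (2 * k + 1) : ℂ)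
      = Complex.I * ((-1 : ℂ) ^ k * z ^ (2 * k + 1) / (qFact q (2 * k + 1) : ℂ)) := by
    intro k
    rw [mul_pow, pow_succ, pow_mul Complex.I, Complex.I_sq]
    ring
  have hse : Summable (fun k : ℕ => (-1 : ℂ) ^ k * z ^ (2 * k) / (qFact q (2 * k) : ℂ)) := by
    exact (hf.comp_injective hinj).congr fun k => heterm k
  have hso : Summable (fun k : ℕ => (-1 : ℂ) ^ k * z ^ (2 * k + 1) / (qFact q (2 * k + 1) : ℂ)) := by
    have h2 := ((hf.comp_injective hinj').congr fun k => hoterm k).mul_left (-Complex.I)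
    refine h2.congr fun k => ?_
    rw [← mul_assoc, neg_mul, Complex.I_mul_I, neg_neg, one_mul]
  have hce : HasSum (fun k : ℕ => (Complex.I * z) ^ (2 * k) / (qFact q (2 * k) : ℂ)) (qCos q z) := by
    have h := hse.hasSum
    have hv : qCos q z = ∑' k : ℕ, (-1 : ℂ) ^ k * z ^ (2 * k) / (qFact q (2 * k) : ℂ) := rfl
    rw [hv]
    exact HasSum.congr_fun h fun k => heterm k
  have hco : HasSum (fun k : ℕ => (Complex.I * z) ^ (2 * k + 1) / (qFact q (2 * k + 1) : ℂ))
      (Complex.I * qSin q z) := by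
    have h := hso.hasSum.mul_left Complex.I
    have hv : qSin q z = ∑' k : ℕ, (-1 : ℂ) ^ k * z ^ (2 * k + 1) / (qFact q (2 * k + 1) : ℂ) := rfl
    rw [hv]
    exact HasSum.congr_fun h fun k => hoterm k
  exact HasSum.even_add_odd hce hco

lemma key_hasSum {q : ℝ} (hq0 : 0 < q) (hq1 : q < 1) (x y : ℂ)
    (hx : ‖x‖ < 1 / (1 - q)) (hy : ‖y‖ < 1 / (1 - q)) :
    HasSum (fun n : ℕ => Complex.I ^ n * qAddPow q x y n / (qFact q n : ℂ))
      ((qCos q x + Complex.I * qSin q x) * (qCos q y + Complex.I * qSin q y)) := by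
  have hFne : ∀ n, ((qFact q n : ℂ)) ≠ 0 := fun n => by
    exact_mod_cast (qFact_pos hq0 hq1 n).ne'
  have habs : ∀ z : ℂ, ‖Complex.I * z‖ = ‖z‖ := by
    intro z; rw [norm_mul, Complex.norm_I, one_mul]
  have hfx := aux_summable hq0 hq1 (Complex.I * x) (by rwa [habs])
  have hfy := aux_summable hq0 hq1 (Complex.I * y) (by rwa [habs])
  have hnx : Summable (fun n : ℕ => ‖(Complex.I * x) ^ n / (qFact q n : ℂ)‖) :=
    summable_norm_iff.mpr hfx
  have hny : Summable (fun n : ℕ => ‖(Complex.I * y) ^ n / (qFact q n : ℂ)‖) :=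
    summable_norm_iff.mpr hfy
  have hprod := hasSum_sum_range_mul_of_summable_norm hnx hny
  rw [(qExpI_hasSum hq0 hq1 x hx).tsum_eq, (qExpI_hasSum hq0 hq1 y hy).tsum_eq] at hprod
  refine HasSum.congr_fun hprod fun n => ?_
  rw [qAddPow, Finset.mul_sum, Finset.sum_div]
  refine Finset.sum_congr rfl fun k hk => ?_
  have hkn : k ≤ n := Nat.lt_succ_iff.mp (Finset.mem_range.mp hk)
  have hbin : (qBinom q n k : ℂ)
      = (qFact q n : ℂ) / ((qFact q k : ℂ) * (qFact q (n - k) : ℂ)) := by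
    rw [qBinom]; push_cast; ring
  have hI : (Complex.I) ^ n = Complex.I ^ k * Complex.I ^ (n - k) := by
    rw [← pow_add, Nat.add_sub_cancel' hkn]
  rw [hbin, hI, mul_pow, mul_pow]
  have h1 := hFne n
  have h2 := hFne k
  have h3 := hFne (n - k)
  field_simp


/-- q-addition formula for cosine:
`cos_q(x ⊕_q y) = cos_q(x) cos_q(y) - sin_q(x) sin_q(y)`. -/
theorem qCos_qAdd (q : ℝ) (hq0 : 0 < q) (hq1 : q < 1) (x y : ℂ)
    (hx : ‖x‖ < 1 / (1 - q)) (hy : ‖y‖ < 1 / (1 - q)) :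
    HasSum (fun n : ℕ => (-1 : ℂ) ^ n * qAddPow q x y (2 * n) / (qFact q (2 * n) : ℂ))
      (qCos q x * qCos q y - qSin q x * qSin q y) := by
  have h1 := key_hasSum hq0 hq1 x y hx hy
  have h2 := key_hasSum hq0 hq1 (-x) (-y) (by rwa [norm_neg])
    (by rwa [norm_neg])
  have hA : ∀ n, qAddPow q (-x) (-y) n = (-1 : ℂ) ^ n * qAddPow q x y n := by
    intro n
    rw [qAddPow, qAddPow, Finset.mul_sum]
    refine Finset.sum_congr rfl fun k hk => ?_
    have hkn : k ≤ n := Nat.lt_succ_iff.mp (Finset.mem_range.mp hk)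
    have hI : ((-1 : ℂ)) ^ n = (-1 : ℂ) ^ k * (-1 : ℂ) ^ (n - k) := by
      rw [← pow_add, Nat.add_sub_cancel' hkn]
    rw [neg_pow x, neg_pow y, hI]
    ring
  have hcosx : qCos q (-x) = qCos q x := by
    rw [qCos, qCos]; congr 1; funext n; rw [Even.neg_pow (even_two_mul n)]
  have hcosy : qCos q (-y) = qCos q y := by
    rw [qCos, qCos]; congr 1; funext n; rw [Even.neg_pow (even_two_mul n)]
  have hsinx : qSin q (-x) = -qSin q x := by
    rw [qSin, qSin, ← tsum_neg]; congr 1; funext n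
    rw [Odd.neg_pow ⟨n, rfl⟩]; ring
  have hsiny : qSin q (-y) = -qSin q y := by
    rw [qSin, qSin, ← tsum_neg]; congr 1; funext n
    rw [Odd.neg_pow ⟨n, rfl⟩]; ring
  rw [hcosx, hcosy, hsinx, hsiny] at h2
  have h2' : HasSum
      (fun n : ℕ => Complex.I ^ n * ((-1 : ℂ) ^ n * qAddPow q x y n) / (qFact q n : ℂ))
      ((qCos q x + Complex.I * -qSin q x) * (qCos q y + Complex.I * -qSin q y)) :=
    HasSum.congr_fun h2 fun n => by rw [hA n]
  have h3 := (h1.add h2').div_const 2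
  have hinj : Function.Injective (fun k : ℕ => 2 * k) := by
    intro a b h; simp only at h; omega
  have hvan : ∀ n ∉ Set.range (fun k : ℕ => 2 * k),
      (Complex.I ^ n * qAddPow q x y n / (qFact q n : ℂ) +
        Complex.I ^ n * ((-1 : ℂ) ^ n * qAddPow q x y n) / (qFact q n : ℂ)) / 2 = 0 := by
    intro n hn
    have hodd : Odd n := by
      rcases Nat.even_or_odd n with he | ho
      · obtain ⟨k, hk⟩ := he
        exact absurd ⟨k, show 2 * k = n by omega⟩ hn
      · exact ho
    obtain ⟨k, rfl⟩ := hodd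
    rw [pow_succ (-1 : ℂ), pow_mul (-1 : ℂ), neg_one_sq, one_pow]
    ring
  have h4 := (Function.Injective.hasSum_iff hinj hvan).mpr h3
  have hval : ((qCos q x + Complex.I * qSin q x) * (qCos q y + Complex.I * qSin q y) +
      (qCos q x + Complex.I * -qSin q x) * (qCos q y + Complex.I * -qSin q y)) / 2
      = qCos q x * qCos q y - qSin q x * qSin q y := by
    have h := Complex.I_sq
    linear_combination (qSin q x * qSin q y / 2) * h * 2
  rw [hval] at h4
  refine HasSum.congr_fun h4 fun k => ?_
  simp only [Function.comp]
  rw [pow_mul Complex.I, Complex.I_sq, pow_mul (-1 : ℂ), neg_one_sq, one_pow]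
  ring
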